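/- Let F : (0,∞) → ℝ be measurable and suppose σ_F(x) := sup_{y ≥ x} |F(y)| is finite for every x > 0 and integrable on (0,∞). Then for every x ≥ 0 and every h ∈ L¹(x,∞), the function y ↦ ∫_x^∞ F(t+y) h(t) dt belongs to L¹(x,∞) and satisfies ∫_x^∞ |∫_x^∞ F(t+y) h(t) dt| dy ≤ σ_{1F}(2x) · ∫_x^∞ |h(t)| dt, where σ_{1F}(x) := ∫_x^∞ σ_F(y) dy. -/

import Mathlib

open MeasureTheory Set Filter
open scoped ENNReal NNReal

/-- `σ_F(x) := sup_{y ≥ x} |F(y)|`. -/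
noncomputable def sigmaF (F : ℝ → ℝ) (x : ℝ) : ℝ :=
  sSup ((fun y => |F y|) '' Set.Ici x)

/-- if `σ_F` is finite on `(0,∞)` and integrable there, then for every `x ≥ 0`
and every `h ∈ L¹(x,∞)` the function `y ↦ ∫_x^∞ F(t+y) h(t) dt` is in `L¹(x,∞)` with
`L¹`-norm at most `σ_{1F}(2x) · ‖h‖_{L¹(x,∞)}`. -/
theorem marchenko_operator_L1_bound
    (F : ℝ → ℝ) (hFmeas : Measurable F)
    (hFbdd : ∀ x > (0 : ℝ), BddAbove ((fun y => |F y|) '' Set.Ici x))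
    (hσint : IntegrableOn (sigmaF F) (Set.Ioi 0)) :
    ∀ x ≥ (0 : ℝ), ∀ h : ℝ → ℝ, IntegrableOn h (Set.Ioi x) →
      IntegrableOn (fun y => ∫ t in Set.Ioi x, F (t + y) * h t) (Set.Ioi x) ∧
      (∫ y in Set.Ioi x, |∫ t in Set.Ioi x, F (t + y) * h t|) ≤
        (∫ y in Set.Ioi (2 * x), sigmaF F y) * ∫ t in Set.Ioi x, |h t| := by
  intro x hx h hInt
  set ν : Measure ℝ := volume.restrict (Set.Ioi x) with hνdef
  -- basic facts about sigmaF
  have hFle : ∀ s : ℝ, 0 < s → |F s| ≤ sigmaF F s := fun s hs =>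
    le_csSup (hFbdd s hs) ⟨s, le_refl s, rfl⟩
  have hσ0 : ∀ s : ℝ, 0 < s → 0 ≤ sigmaF F s := fun s hs =>
    (abs_nonneg _).trans (hFle s hs)
  have h2x : Set.Ioi (2 * x) ⊆ Set.Ioi (0 : ℝ) := Set.Ioi_subset_Ioi (by linarith)
  have hσ2x : IntegrableOn (sigmaF F) (Set.Ioi (2 * x)) := hσint.mono_set h2x
  set σ1 : ℝ := ∫ y in Set.Ioi (2 * x), sigmaF F y with hσ1def
  have hσ1nonneg : 0 ≤ σ1 :=
    setIntegral_nonneg measurableSet_Ioi fun s hs => hσ0 s (h2x hs)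
  set H : ℝ := ∫ t in Set.Ioi x, |h t| with hHdef
  have hHnonneg : 0 ≤ H :=
    setIntegral_nonneg measurableSet_Ioi fun t _ => abs_nonneg _
  -- the dominating kernel
  set G : ℝ → ℝ≥0∞ := (Set.Ioi (2 * x)).indicator (fun s => ENNReal.ofReal (sigmaF F s))
    with hGdef
  set L : ℝ≥0∞ := ∫⁻ s in Set.Ioi (2 * x), ENNReal.ofReal (sigmaF F s) with hLdef
  have hL : L = ENNReal.ofReal σ1 := by
    rw [hσ1def]
    exact (ofReal_integral_eq_lintegral_ofReal hσ2x
      ((ae_restrict_iff' measurableSet_Ioi).2 (ae_of_all _ fun s hs => hσ0 s (h2x hs)))).symm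
  have hLG : ∫⁻ s, G s = L := by
    rw [hGdef, lintegral_indicator measurableSet_Ioi _]
  have hHlint : ∫⁻ t, (‖h t‖₊ : ℝ≥0∞) ∂ν = ENNReal.ofReal H := by
    simp only [← enorm_eq_nnnorm]
    rw [hHdef, ← ofReal_integral_norm_eq_lintegral_enorm hInt]
    simp [Real.norm_eq_abs]
  -- measurability of G
  have hGmeas : AEMeasurable G volume := by
    rw [hGdef, aemeasurable_indicator_iff measurableSet_Ioi]
    exact (ENNReal.measurable_ofReal.comp_aemeasurable
      ((hσint.1.aemeasurable).mono_measure (Measure.restrict_mono h2x le_rfl)))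
  -- the addition map is quasi-measure-preserving from ν.prod ν to volume
  have hadd : Measurable fun p : ℝ × ℝ => p.2 + p.1 := measurable_snd.add measurable_fst
  have hqmp : Measure.QuasiMeasurePreserving (fun p : ℝ × ℝ => p.2 + p.1)
      (ν.prod ν) volume := by
    refine ⟨hadd, Measure.AbsolutelyContinuous.mk fun S hS h0 => ?_⟩
    rw [Measure.map_apply hadd hS, Measure.prod_apply (hadd hS)]
    have : ∀ y : ℝ, ν (Prod.mk y ⁻¹' ((fun p : ℝ × ℝ => p.2 + p.1) ⁻¹' S)) = 0 := by
      intro y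
      have hle : ν (Prod.mk y ⁻¹' ((fun p : ℝ × ℝ => p.2 + p.1) ⁻¹' S)) ≤
          volume ((fun t : ℝ => t + y) ⁻¹' S) := by
        exact Measure.restrict_apply_le _ _
      have : volume ((fun t : ℝ => t + y) ⁻¹' S) = volume S := by
        exact measure_preimage_add_right volume y S
      rw [this, h0] at hle
      exact le_antisymm hle zero_le
    simp [this]
  have hqmp_snd : Measure.QuasiMeasurePreserving (Prod.snd : ℝ × ℝ → ℝ) (ν.prod ν) ν :=
    Measure.quasiMeasurePreserving_snd
  -- the kernel function on the product space
  have hker : AEMeasurable (fun p : ℝ × ℝ => G (p.2 + p.1) * (‖h p.2‖₊ : ℝ≥0∞)) (ν.prod ν) :=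
    (hGmeas.comp_quasiMeasurePreserving hqmp).mul
      (hInt.1.enorm.comp_quasiMeasurePreserving hqmp_snd)
  -- pointwise bound
  have hpt : ∀ y ∈ Set.Ioi x, ∀ t ∈ Set.Ioi x,
      (‖F (t + y) * h t‖₊ : ℝ≥0∞) ≤ G (t + y) * ‖h t‖₊ := by
    intro y hy t ht
    have hty : t + y ∈ Set.Ioi (2 * x) := by
      simp only [Set.mem_Ioi] at *
      linarith
    have h0ty : 0 < t + y := lt_of_le_of_lt (by linarith) hty
    rw [hGdef, Set.indicator_of_mem hty]
    have h1 : (‖F (t + y) * h t‖₊ : ℝ≥0∞) = (‖F (t + y)‖₊ : ℝ≥0∞) * (‖h t‖₊ : ℝ≥0∞) := by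
      rw [nnnorm_mul, ENNReal.coe_mul]
    rw [h1]
    refine mul_le_mul_left ?_ _
    rw [← enorm_eq_nnnorm, ← ofReal_norm]
    exact ENNReal.ofReal_le_ofReal (by simpa [Real.norm_eq_abs] using hFle _ h0ty)
  -- the main double lintegral bound
  set I : ℝ≥0∞ := ∫⁻ y, (∫⁻ t, (‖F (t + y) * h t‖₊ : ℝ≥0∞) ∂ν) ∂ν with hIdef
  have hIbound : I ≤ ENNReal.ofReal σ1 * ENNReal.ofReal H := by
    have step1 : I ≤ ∫⁻ y, (∫⁻ t, G (t + y) * (‖h t‖₊ : ℝ≥0∞) ∂ν) ∂ν := by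
      rw [hIdef]
      refine lintegral_mono_ae ((ae_restrict_iff' measurableSet_Ioi).2
        (ae_of_all _ fun y hy => ?_))
      exact lintegral_mono_ae ((ae_restrict_iff' measurableSet_Ioi).2
        (ae_of_all _ fun t ht => hpt y hy t ht))
    have step2 : ∫⁻ y, (∫⁻ t, G (t + y) * (‖h t‖₊ : ℝ≥0∞) ∂ν) ∂ν
        = ∫⁻ t, (∫⁻ y, G (t + y) * (‖h t‖₊ : ℝ≥0∞) ∂ν) ∂ν := by
      exact lintegral_lintegral_swap hker
    have step3 : ∀ t ∈ Set.Ioi x,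
        (∫⁻ y, G (t + y) * (‖h t‖₊ : ℝ≥0∞) ∂ν) ≤ (‖h t‖₊ : ℝ≥0∞) * L := by
      intro t _
      have e1 : (∫⁻ y, G (t + y) * (‖h t‖₊ : ℝ≥0∞) ∂ν)
          = (‖h t‖₊ : ℝ≥0∞) * ∫⁻ y, G (t + y) ∂ν := by
        rw [← lintegral_const_mul' _ _ ENNReal.coe_ne_top]
        exact lintegral_congr fun y => mul_comm _ _
      rw [e1]
      refine mul_le_mul_right ?_ _
      calc ∫⁻ y, G (t + y) ∂ν ≤ ∫⁻ y, G (t + y) := setLIntegral_le_lintegral _ _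
        _ = ∫⁻ s, G s := lintegral_add_left_eq_self G t
        _ = L := hLG
    have step4 : ∫⁻ t, (∫⁻ y, G (t + y) * (‖h t‖₊ : ℝ≥0∞) ∂ν) ∂ν
        ≤ ∫⁻ t, (‖h t‖₊ : ℝ≥0∞) * L ∂ν := by
      refine lintegral_mono_ae ((ae_restrict_iff' measurableSet_Ioi).2
        (ae_of_all _ step3))
    have step5 : ∫⁻ t, (‖h t‖₊ : ℝ≥0∞) * L ∂ν = ENNReal.ofReal H * L := by
      rw [lintegral_mul_const' _ _ (by rw [hL]; exact ENNReal.ofReal_ne_top), hHlint]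
    calc I ≤ ∫⁻ y, (∫⁻ t, G (t + y) * (‖h t‖₊ : ℝ≥0∞) ∂ν) ∂ν := step1
      _ = ∫⁻ t, (∫⁻ y, G (t + y) * (‖h t‖₊ : ℝ≥0∞) ∂ν) ∂ν := step2
      _ ≤ ∫⁻ t, (‖h t‖₊ : ℝ≥0∞) * L ∂ν := step4
      _ = ENNReal.ofReal H * L := step5
      _ = ENNReal.ofReal σ1 * ENNReal.ofReal H := by rw [hL, mul_comm]
  -- measurability of the inner integral function
  have hmeas2 : AEStronglyMeasurable (fun p : ℝ × ℝ => F (p.2 + p.1) * h p.2) (ν.prod ν) :=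
    (hFmeas.comp hadd).aestronglyMeasurable.mul hInt.1.comp_snd
  have hinner_meas : AEStronglyMeasurable (fun y => ∫ t, F (t + y) * h t ∂ν) ν :=
    hmeas2.integral_prod_right'
  -- the inner function's L¹ norm is bounded by I
  have hnorm_le : ∫⁻ y, (‖∫ t, F (t + y) * h t ∂ν‖₊ : ℝ≥0∞) ∂ν ≤ I := by
    rw [hIdef]
    exact lintegral_mono fun y => enorm_integral_le_lintegral_enorm _
  have hItop : I ≤ ENNReal.ofReal σ1 * ENNReal.ofReal H := hIbound
  have hIfin : I < ⊤ :=
    lt_of_le_of_lt hItop (ENNReal.mul_lt_top ENNReal.ofReal_lt_top ENNReal.ofReal_lt_top)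
  have hint : IntegrableOn (fun y => ∫ t in Set.Ioi x, F (t + y) * h t) (Set.Ioi x) := by
    refine ⟨hinner_meas, ?_⟩
    exact lt_of_le_of_lt hnorm_le hIfin
  refine ⟨hint, ?_⟩
  -- final estimate
  have e1 : (∫ y in Set.Ioi x, |∫ t in Set.Ioi x, F (t + y) * h t|)
      = (∫⁻ y, (‖∫ t, F (t + y) * h t ∂ν‖₊ : ℝ≥0∞) ∂ν).toReal := by
    simp only [← enorm_eq_nnnorm]
    rw [← integral_norm_eq_lintegral_enorm hinner_meas]
    simp [Real.norm_eq_abs]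
    rfl
  rw [e1]
  have e2 : (∫⁻ y, (‖∫ t, F (t + y) * h t ∂ν‖₊ : ℝ≥0∞) ∂ν).toReal
      ≤ (ENNReal.ofReal σ1 * ENNReal.ofReal H).toReal := by
    refine ENNReal.toReal_mono (ENNReal.mul_ne_top ENNReal.ofReal_ne_top ENNReal.ofReal_ne_top)
      (le_trans hnorm_le hItop)
  refine le_trans e2 ?_
  rw [ENNReal.toReal_mul, ENNReal.toReal_ofReal hσ1nonneg, ENNReal.toReal_ofReal hHnonneg]
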